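/- Define ψ : ℝ → ℝ by ψ(t) = cos²(2t) + sinh²(t). Then there exists t₀ > 0 such that ψ is strictly decreasing on (0, t₀) and strictly increasing on (t₀, +∞); moreover there exists a unique t₁ > 0 with ψ(t₁) = 1, and ψ(t) > 1 for t > t₁. -/

import Mathlib

open Real Set

private lemma q_pos {u : ℝ} (h0 : 0 < u) (h1 : u < π/2) :
    0 < Real.cosh u * Real.sin u - Real.sinh u * Real.cos u := by
  have hpi := Real.pi_pos
  have hmono : StrictMonoOn (fun v => Real.cosh v * Real.sin v - Real.sinh v * Real.cos v)
      (Icc 0 (π/2)) := by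
    apply strictMonoOn_of_deriv_pos (convex_Icc _ _)
    · fun_prop
    · intro x hx
      rw [interior_Icc] at hx
      have hd : HasDerivAt (fun v => Real.cosh v * Real.sin v - Real.sinh v * Real.cos v)
          (2 * Real.sinh x * Real.sin x) x := by
        have := ((Real.hasDerivAt_cosh x).mul (Real.hasDerivAt_sin x)).sub
          ((Real.hasDerivAt_sinh x).mul (Real.hasDerivAt_cos x))
        refine this.congr_deriv ?_
        ring
      rw [hd.deriv]
      have hs : 0 < Real.sinh x := Real.sinh_pos_iff.2 hx.1
      have hsin : 0 < Real.sin x := Real.sin_pos_of_pos_of_lt_pi hx.1 (by linarith [hx.2])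
      positivity
  have h := hmono (left_mem_Icc.2 (by linarith)) ⟨h0.le, h1.le⟩ h0
  simpa using h

private lemma r_mono : StrictMonoOn (fun u => Real.sinh u / Real.sin u) (Ioo 0 (π/2)) := by
  have hpi := Real.pi_pos
  apply strictMonoOn_of_deriv_pos (convex_Ioo _ _)
  · apply ContinuousOn.div Real.continuous_sinh.continuousOn Real.continuous_sin.continuousOn
    intro x hx
    exact (Real.sin_pos_of_pos_of_lt_pi hx.1 (by linarith [hx.2])).ne'
  · intro x hx
    rw [interior_Ioo] at hx
    have hs : 0 < Real.sin x := Real.sin_pos_of_pos_of_lt_pi hx.1 (by linarith [hx.2])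
    have hd : HasDerivAt (fun u => Real.sinh u / Real.sin u)
        ((Real.cosh x * Real.sin x - Real.sinh x * Real.cos x) / Real.sin x ^ 2) x :=
      (Real.hasDerivAt_sinh x).div (Real.hasDerivAt_sin x) hs.ne'
    rw [hd.deriv]
    exact div_pos (q_pos hx.1 hx.2) (by positivity)

private lemma p_mono : StrictMonoOn
    (fun u => Real.sinh u / Real.sin u - 4 * Real.cos u) (Ioo 0 (π/2)) := by
  have hpi := Real.pi_pos
  intro a ha b hb hab
  have h1 := r_mono ha hb hab
  have h2 : Real.cos b < Real.cos a :=
    Real.strictAntiOn_cos ⟨ha.1.le, by linarith [ha.2]⟩ ⟨hb.1.le, by linarith [hb.2]⟩ hab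
  dsimp at h1 ⊢
  linarith

private lemma F_eq {u : ℝ} (h0 : 0 < u) (h1 : u < π/2) :
    Real.sinh u - 2 * Real.sin (2 * u) =
      Real.sin u * (Real.sinh u / Real.sin u - 4 * Real.cos u) := by
  have hpi := Real.pi_pos
  have hs : Real.sin u ≠ 0 := (Real.sin_pos_of_pos_of_lt_pi h0 (by linarith)).ne'
  rw [Real.sin_two_mul]
  field_simp
  ring

private lemma sinh_pi_div_two_gt_two : 2 < Real.sinh (π/2) := by
  have hπ : 3.141592 < π := Real.pi_gt_d6
  have hπ' : π < 3.141593 := Real.pi_lt_d6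
  have he : 1 + π/4 + (π/4)^2/2 ≤ Real.exp (π/4) :=
    Real.quadratic_le_exp_of_nonneg (by linarith)
  have hlb : (2.09:ℝ) ≤ Real.exp (π/4) := by nlinarith
  have he2 : Real.exp (π/2) = Real.exp (π/4) ^ 2 := by
    rw [sq, ← Real.exp_add]; ring_nf
  have hexp2 : (4.36:ℝ) ≤ Real.exp (π/2) := by
    rw [he2]; nlinarith [Real.exp_pos (π/4)]
  have hneg : Real.exp (-(π/2)) ≤ 1/4.36 := by
    rw [Real.exp_neg]
    rw [inv_le_comm₀ (Real.exp_pos _) (by norm_num)]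
    linarith
  rw [Real.sinh_eq]
  linarith

private lemma F_pos_of_big {v : ℝ} (hv : π/2 ≤ v) : 0 < Real.sinh v - 2 * Real.sin (2 * v) := by
  have h1 : Real.sinh (π/2) ≤ Real.sinh v := Real.sinh_le_sinh.2 hv
  have h2 := sinh_pi_div_two_gt_two
  have h3 := Real.sin_le_one (2 * v)
  linarith

private lemma psi_deriv (t : ℝ) :
    HasDerivAt (fun t : ℝ => Real.cos (2 * t) ^ 2 + Real.sinh t ^ 2)
      (Real.sinh (2 * t) - 2 * Real.sin (2 * (2 * t))) t := by
  have hc : HasDerivAt (fun t : ℝ => 2 * t) 2 t := by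
    simpa using (hasDerivAt_id t).const_mul (2:ℝ)
  have h1 : HasDerivAt (fun t : ℝ => Real.cos (2 * t)) (-Real.sin (2 * t) * 2) t :=
    (Real.hasDerivAt_cos (2 * t)).comp t hc
  have h2 := (h1.pow 2).add ((Real.hasDerivAt_sinh t).pow 2)
  refine h2.congr_deriv ?_
  rw [Real.sinh_two_mul, Real.sin_two_mul (2 * t)]
  norm_num
  ring

theorem psi_monotonicity :
    ∃ t₀ > (0:ℝ),
      StrictAntiOn (fun t : ℝ => Real.cos (2 * t) ^ 2 + Real.sinh t ^ 2) (Ioo 0 t₀) ∧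
      StrictMonoOn (fun t : ℝ => Real.cos (2 * t) ^ 2 + Real.sinh t ^ 2) (Ioi t₀) ∧
      (∃! t₁ : ℝ, 0 < t₁ ∧ Real.cos (2 * t₁) ^ 2 + Real.sinh t₁ ^ 2 = 1) ∧
      (∀ t₁ : ℝ, 0 < t₁ → Real.cos (2 * t₁) ^ 2 + Real.sinh t₁ ^ 2 = 1 →
        ∀ t : ℝ, t₁ < t → 1 < Real.cos (2 * t) ^ 2 + Real.sinh t ^ 2) := by
  have hpi := Real.pi_gt_three
  set F : ℝ → ℝ := fun u => Real.sinh u - 2 * Real.sin (2 * u) with hF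
  -- F (1/2) < 0
  have hFhalf : F (1/2) < 0 := by
    have hsin1 : (3/4 : ℝ) < Real.sin 1 := by
      have := Real.sin_gt_sub_cube (by norm_num : (0:ℝ) < 1)
      norm_num at this ⊢
      linarith
    have hexp : Real.exp (1/2) < 1.7 := by
      have h2 : Real.exp (1/2) ^ 2 = Real.exp 1 := by
        rw [sq, ← Real.exp_add]; norm_num
      nlinarith [Real.exp_pos (1/2), Real.exp_one_lt_d9]
    have hsinh : Real.sinh (1/2) < 0.85 := by
      rw [Real.sinh_eq]
      have := Real.exp_pos (-(1/2:ℝ))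
      linarith
    simp only [hF]
    norm_num
    linarith
  -- F (π/2) > 0
  have hFpi : 0 < F (π/2) := by
    simp only [hF]
    have : 2 * (π/2) = π := by ring
    rw [this, Real.sin_pi]
    have : 0 < Real.sinh (π/2) := Real.sinh_pos_iff.2 (by linarith)
    linarith
  have hhalf_lt : (1/2 : ℝ) < π/2 := by linarith
  -- zero of F
  have hcont : ContinuousOn F (Icc (1/2) (π/2)) := by fun_prop
  obtain ⟨u, huIoo, hFu⟩ : ∃ u ∈ Ioo (1/2 : ℝ) (π/2), F u = 0 := by
    have h := intermediate_value_Ioo hhalf_lt.le hcont ⟨hFhalf, hFpi⟩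
    obtain ⟨u, hu, h0⟩ := h
    exact ⟨u, hu, h0⟩
  have hu0 : 0 < u := by linarith [huIoo.1]
  have hu2 : u < π/2 := huIoo.2
  have hsinu : 0 < Real.sin u := Real.sin_pos_of_pos_of_lt_pi hu0 (by linarith)
  have hpu : Real.sinh u / Real.sin u - 4 * Real.cos u = 0 := by
    have h0 : Real.sin u * (Real.sinh u / Real.sin u - 4 * Real.cos u) = 0 := by
      rw [← F_eq hu0 hu2]; exact hFu
    rcases mul_eq_zero.1 h0 with h' | h'
    · exact absurd h' hsinu.ne'
    · exact h'
  -- sign of F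
  have hFneg : ∀ v : ℝ, 0 < v → v < u → F v < 0 := by
    intro v hv0 hvu
    have hv2 : v < π/2 := hvu.trans hu2
    have hp : Real.sinh v / Real.sin v - 4 * Real.cos v
        < Real.sinh u / Real.sin u - 4 * Real.cos u := p_mono ⟨hv0, hv2⟩ ⟨hu0, hu2⟩ hvu
    rw [hpu] at hp
    have hsv : 0 < Real.sin v := Real.sin_pos_of_pos_of_lt_pi hv0 (by linarith)
    have := F_eq hv0 hv2
    simp only [hF]
    rw [this]
    exact mul_neg_of_pos_of_neg hsv hp
  have hFpos : ∀ v : ℝ, u < v → 0 < F v := by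
    intro v huv
    rcases lt_or_ge v (π/2) with hv2 | hv2
    · have hp : Real.sinh u / Real.sin u - 4 * Real.cos u
          < Real.sinh v / Real.sin v - 4 * Real.cos v := p_mono ⟨hu0, hu2⟩ ⟨hu0.trans huv, hv2⟩ huv
      rw [hpu] at hp
      have hsv : 0 < Real.sin v := Real.sin_pos_of_pos_of_lt_pi (hu0.trans huv) (by linarith)
      have := F_eq (hu0.trans huv) hv2
      simp only [hF]
      rw [this]
      exact mul_pos hsv hp
    · exact F_pos_of_big hv2
  -- t₀
  set ψ : ℝ → ℝ := fun t => Real.cos (2 * t) ^ 2 + Real.sinh t ^ 2 with hψ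
  have hψcont : Continuous ψ := by fun_prop
  set t₀ : ℝ := u/2 with ht₀
  have ht₀pos : 0 < t₀ := by positivity
  have hanti : StrictAntiOn ψ (Icc 0 t₀) := by
    apply strictAntiOn_of_deriv_neg (convex_Icc _ _) hψcont.continuousOn
    intro x hx
    rw [interior_Icc] at hx
    rw [(psi_deriv x).deriv]
    exact hFneg (2*x) (by linarith [hx.1]) (by rw [ht₀] at hx; linarith [hx.2])
  have hmono : StrictMonoOn ψ (Ici t₀) := by
    apply strictMonoOn_of_deriv_pos (convex_Ici _)  hψcont.continuousOn
    intro x hx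
    rw [interior_Ici] at hx
    rw [(psi_deriv x).deriv]
    exact hFpos (2*x) (by rw [ht₀] at hx; simp only [mem_Ioi] at hx; linarith)
  have hψ0 : ψ 0 = 1 := by simp [hψ]
  have hlt1 : ∀ s : ℝ, 0 < s → s ≤ t₀ → ψ s < 1 := by
    intro s hs0 hst
    have := hanti (left_mem_Icc.2 (by linarith)) ⟨hs0.le, hst⟩ hs0
    rwa [hψ0] at this
  -- ψ big at T
  set T : ℝ := max 1 (t₀ + 1) with hT
  have hT1 : (1:ℝ) ≤ T := le_max_left _ _
  have hTt₀ : t₀ < T := lt_of_lt_of_le (by linarith) (le_max_right _ _)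
  have hψT : 1 < ψ T := by
    have h1 : 1 ≤ T := hT1
    have h2 : T < Real.sinh T := Real.self_lt_sinh_iff.2 (by linarith)
    have h3 : 1 < Real.sinh T := by linarith
    have : 1 < Real.sinh T ^ 2 := by nlinarith
    have hc := sq_nonneg (Real.cos (2 * T))
    simp only [hψ]
    nlinarith
  have hψt₀ : ψ t₀ < 1 := hlt1 t₀ ht₀pos le_rfl
  obtain ⟨t₁, ht₁Ioo, hψt₁⟩ : ∃ t₁ ∈ Ioo t₀ T, ψ t₁ = 1 := by
    have h := intermediate_value_Ioo hTt₀.le hψcont.continuousOn ⟨hψt₀, hψT⟩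
    obtain ⟨t₁, h1, h2⟩ := h
    exact ⟨t₁, h1, h2⟩
  have ht₁pos : 0 < t₁ := ht₀pos.trans ht₁Ioo.1
  -- key: any root is > t₀ and unique
  have hroot_gt : ∀ s : ℝ, 0 < s → ψ s = 1 → t₀ < s := by
    intro s hs0 hs1
    by_contra h
    push_neg at h
    exact absurd hs1 (hlt1 s hs0 h).ne
  refine ⟨t₀, ht₀pos, hanti.mono Ioo_subset_Icc_self, hmono.mono Ioi_subset_Ici_self, ?_, ?_⟩
  · refine ⟨t₁, ⟨ht₁pos, hψt₁⟩, ?_⟩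
    rintro s ⟨hs0, hs1⟩
    have hst₀ : t₀ < s := hroot_gt s hs0 hs1
    exact hmono.injOn (mem_Ici.2 hst₀.le) (mem_Ici.2 ht₁Ioo.1.le) (hs1.trans hψt₁.symm)
  · intro s hs0 hs1 t hst
    have hst₀ : t₀ < s := hroot_gt s hs0 hs1
    have h := hmono (mem_Ici.2 hst₀.le) (mem_Ici.2 (by linarith : t₀ ≤ t)) hst
    exact lt_of_le_of_lt (le_of_eq hs1.symm) h
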